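/- A valid monolithic DRUP proof certifies unsatisfiability: if π = c₁,…,cₙ is a sequence of steps where each step either asserts a clause or adds a RUP clause with respect to the currently active clauses, and the last step adds the empty clause, then the set of all asserted clauses of π is unsatisfiable. -/
import Mathlib


/-- Propositional variables. -/
abbrev Var := ℕ
/-- A literal is a variable together with a polarity. -/
abbrev Lit := Var × Bool
/-- A clause is a finite set of literals. -/
abbrev Clause := Finset Lit
/-- A total truth assignment. -/
abbrev Assignment := Var → Bool

/-- Negation of a literal. -/
def Lit.neg (l : Lit) : Lit := (l.1, !l.2)

/-- An assignment satisfies a literal. -/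
def satLit (σ : Assignment) (l : Lit) : Prop := σ l.1 = l.2
/-- An assignment satisfies a clause (some literal is true). -/
def satClause (σ : Assignment) (C : Clause) : Prop := ∃ l ∈ C, satLit σ l
/-- An assignment satisfies a set of clauses. -/
def satSet (σ : Assignment) (Γ : Set Clause) : Prop := ∀ C ∈ Γ, satClause σ C
/-- Semantic consequence: every model of Γ satisfies C. -/
def entails (Γ : Set Clause) (C : Clause) : Prop :=
  ∀ σ : Assignment, satSet σ Γ → satClause σ C

/-- Unit-propagation closure: the least set of literals containing the
assumptions `A` and closed under the unit-propagation rule for clauses of `Γ`: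
if all literals of a clause but one are falsified (their negations derived),
the remaining literal is derived. -/
inductive UPC (Γ : Set Clause) (A : Set Lit) : Lit → Prop
  | assm {l : Lit} : l ∈ A → UPC Γ A l
  | prop {C : Clause} {l : Lit} : C ∈ Γ → l ∈ C →
      (∀ l' ∈ C, l' ≠ l → UPC Γ A (Lit.neg l')) → UPC Γ A l

/-- Unit propagation from `Γ` under assumptions `A` reaches a conflict:
some clause of `Γ` has all its literals falsified by the closure. -/
def upConflict (Γ : Set Clause) (A : Set Lit) : Prop :=
  ∃ C ∈ Γ, ∀ l ∈ C, UPC Γ A (Lit.neg l)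

/-- `RUP Γ C` (written `Γ ⊢_UP C`): unit propagation from `Γ` together with the
negations of the literals of `C` reaches a conflict. -/
def RUP (Γ : Set Clause) (C : Clause) : Prop :=
  upConflict Γ {l | ∃ m ∈ C, l = Lit.neg m}

/-- A step of a monolithic DRUP proof. -/
inductive Step
  | asserted (c : Clause)
  | rup (c : Clause)
  | del (c : Clause)
deriving DecidableEq

/-- The active clauses of a sequence of steps: added (asserted or rup)
and not subsequently deleted. -/
def active (π : List Step) : Set Clause :=
  {c | ∃ i, ∃ hi : i < π.length,
      ((π[i]'hi) = Step.asserted c ∨ (π[i]'hi) = Step.rup c) ∧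
      ∀ k, ∀ hk : k < π.length, i < k → (π[k]'hk) ≠ Step.del c}

/-- All clauses asserted in a monolithic DRUP proof. -/
def allassertedMono (π : List Step) : Set Clause := {c | Step.asserted c ∈ π}

/-- Validity of a monolithic DRUP proof: each rup step is a reverse unit
propagation consequence of the currently active clauses, and the last
step adds the empty clause. -/
def validMono (π : List Step) : Prop :=
  (∀ i, ∀ hi : i < π.length, ∀ c : Clause,
      (π[i]'hi) = Step.rup c → RUP (active (π.take i)) c) ∧
  ∃ hne : π ≠ [], π.getLast hne = Step.rup ∅ ∨ π.getLast hne = Step.asserted ∅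


lemma upc_sat {Γ : Set Clause} {A : Set Lit} {σ : Assignment}
    (hΓ : satSet σ Γ) (hA : ∀ l ∈ A, satLit σ l) :
    ∀ l, UPC Γ A l → satLit σ l := by
  intro l h
  induction h with
  | assm h => exact hA _ h
  | @prop C l hC hl hrest ih =>
    rcases hΓ _ hC with ⟨m, hm, hsm⟩
    by_cases hml : m = l
    · exact hml ▸ hsm
    · exfalso
      have hneg := ih m hm hml
      simp only [satLit, Lit.neg] at hneg hsm
      rw [hsm] at hneg
      simp at hneg

lemma rup_sound {Γ : Set Clause} {C : Clause} (h : RUP Γ C) : entails Γ C := by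
  intro σ hσ
  by_contra hC
  rcases h with ⟨D, hD, hall⟩
  have hA : ∀ l ∈ {l | ∃ m ∈ C, l = Lit.neg m}, satLit σ l := by
    rintro l ⟨m, hm, rfl⟩
    have hns : ¬ satLit σ m := fun hs => hC ⟨m, hm, hs⟩
    simp only [satLit, Lit.neg] at *
    revert hns; cases m.2 <;> cases (σ m.1) <;> simp
  rcases hσ _ hD with ⟨m, hm, hsm⟩
  have hneg := upc_sat hσ hA _ (hall m hm)
  simp only [satLit, Lit.neg] at hneg hsm
  rw [hsm] at hneg
  simp at hneg

lemma active_sat (π : List Step)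
    (hv : ∀ i, ∀ hi : i < π.length, ∀ c : Clause,
      (π[i]'hi) = Step.rup c → RUP (active (π.take i)) c)
    (σ : Assignment) (hσ : satSet σ (allassertedMono π)) :
    ∀ n, satSet σ (active (π.take n)) := by
  intro n
  induction n using Nat.strong_induction_on with
  | _ n ih =>
    rintro c ⟨i, hi, hadd, -⟩
    have hin : i < n := lt_of_lt_of_le hi (by simp [List.length_take])
    have hiπ : i < π.length := lt_of_lt_of_le hi (by simp [List.length_take])
    have heq : (π.take n)[i]'hi = π[i]'hiπ := List.getElem_take ..
    rw [heq] at hadd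
    cases hadd with
    | inl ha =>
      exact hσ c (by simp only [allassertedMono, Set.mem_setOf_eq, ← ha]; exact List.getElem_mem _)
    | inr hr =>
      exact rup_sound (hv i hiπ c hr) σ (ih i hin)

/-- a valid monolithic DRUP proof certifies that the set of all
asserted clauses is unsatisfiable. -/
theorem drup_sound (π : List Step) (h : validMono π) :
    ¬ ∃ σ : Assignment, satSet σ (allassertedMono π) := by
  rintro ⟨σ, hσ⟩
  obtain ⟨hv, hne, hlast⟩ := h
  have hlen : 0 < π.length := List.length_pos_iff.mpr hne
  have hgl : π.getLast hne = π[π.length - 1]'(by omega) := by rw [List.getLast_eq_getElem]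
  cases hlast with
  | inl hr =>
    rw [hgl] at hr
    have hRUP := hv (π.length - 1) (by omega) ∅ hr
    rcases rup_sound hRUP σ (active_sat π hv σ hσ (π.length - 1)) with ⟨l, hl, -⟩
    exact absurd hl (Finset.notMem_empty l)
  | inr ha =>
    rw [hgl] at ha
    have : Step.asserted (∅ : Clause) ∈ π := by rw [← ha]; exact List.getElem_mem _
    rcases hσ ∅ this with ⟨l, hl, -⟩
    exact absurd hl (Finset.notMem_empty l)
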